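/- arXiv:1409.3150 — 3 statements merged into one kernel-verified Lean document; each statement's English description precedes it below -/
import Mathlib

section
/- For n even, the reduction map π_n from labelled n-regular multigraphs to unlabelled connected multigraphs has image exactly the set of connected multigraphs all of whose vertices have even degree; in particular it is surjective onto this subset. -/
/-- A multigraph: a vertex type, an edge type, and an endpoint assignment
(loops and multi-edges allowed). -/
structure Multigraph where
  V : Type
  E : Type
  ends : E → Sym2 V

namespace Multigraph

/-- Adjacency: two vertices are adjacent when some edge has them as endpoints. -/
def Adj (G : Multigraph) (u v : G.V) : Prop := ∃ e : G.E, G.ends e = s(u, v)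

/-- A multigraph is connected if it is nonempty and any two vertices are joined by a walk. -/
def Connected (G : Multigraph) : Prop :=
  Nonempty G.V ∧ ∀ u v : G.V, Relation.ReflTransGen G.Adj u v

/-- The degree of a vertex: the number of incident edges, with loops counted twice. -/
noncomputable def degree (G : Multigraph) (v : G.V) : ℕ :=
  Nat.card {e : G.E // v ∈ G.ends e} + Nat.card {e : G.E // G.ends e = s(v, v)}

/-- Finiteness of a multigraph. -/
def IsFinite (G : Multigraph) : Prop := Finite G.V ∧ Finite G.E

end Multigraph

/-- A labelled graph: a multigraph whose edges carry a label `real`/`virtual`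
(`virt e` means `e` is virtual). -/
structure LabelledGraph extends Multigraph where
  virt : E → Prop

namespace LabelledGraph

/-- Adjacency via virtual edges only. -/
def VirtAdj (G : LabelledGraph) (u v : G.V) : Prop :=
  ∃ e : G.E, G.virt e ∧ G.toMultigraph.ends e = s(u, v)

/-- Number of loops of a labelled graph. -/
noncomputable def loopCount (G : LabelledGraph) : ℕ :=
  Nat.card {e : G.E // ∃ v : G.V, G.toMultigraph.ends e = s(v, v)}

/-- A labelled graph is loopless if no edge is a loop. -/
def Loopless (G : LabelledGraph) : Prop :=
  ∀ e : G.E, ¬ ∃ v : G.V, G.toMultigraph.ends e = s(v, v)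

end LabelledGraph

/-- `ReducesTo G c`: the unlabelled multigraph `c` is obtained from the labelled graph `G`
by contracting all virtual non-loop edges (identifying their endpoints) and deleting all
virtual loops.  `q` is the quotient map on vertices (its fibres are exactly the classes of
vertices joined by chains of virtual edges) and the real edges of `G` correspond
bijectively to the edges of `c`, compatibly with endpoints. -/
def ReducesTo (G : LabelledGraph) (c : Multigraph) : Prop :=
  ∃ (q : G.V → c.V) (fE : {e : G.E // ¬ G.virt e} ≃ c.E),
    Function.Surjective q ∧
    (∀ u v : G.V, q u = q v ↔ Relation.ReflTransGen G.VirtAdj u v) ∧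
    ∀ e : {e : G.E // ¬ G.virt e}, c.ends (fE e) = (G.toMultigraph.ends e.1).map q

open Classical

noncomputable def cnt {V : Type} (v : V) : Sym2 V → ℕ :=
  Sym2.lift ⟨fun a b => (if a = v then 1 else 0) + (if b = v then 1 else 0),
    fun a b => by exact Nat.add_comm _ _⟩

lemma cnt_mk {V : Type} (v a b : V) :
    cnt v s(a, b) = (if a = v then 1 else 0) + (if b = v then 1 else 0) := by
  unfold cnt; rw [Sym2.lift_mk]

lemma card_subtype_eq_sum {α : Type} [Fintype α] (P : α → Prop) :
    Nat.card {x // P x} = ∑ x : α, if P x then 1 else 0 := by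
  rw [Nat.card_eq_fintype_card, Fintype.card_subtype, Finset.card_filter]

lemma degree_eq_sum (G : Multigraph) [Fintype G.E] (v : G.V) :
    G.degree v = ∑ e : G.E, cnt v (G.ends e) := by
  unfold Multigraph.degree
  rw [card_subtype_eq_sum, card_subtype_eq_sum, ← Finset.sum_add_distrib]
  refine Finset.sum_congr rfl fun e _ => ?_
  induction G.ends e using Sym2.ind with
  | _ a b =>
    rw [cnt_mk]
    by_cases ha : a = v <;> by_cases hb : b = v <;>
      simp [Sym2.mem_iff, Sym2.eq_iff, ha, hb, eq_comm (a := v)]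

lemma sum_ite_eq_single {V : Type} [Fintype V] (P : V → Prop) (x : V) :
    (∑ u : V, if P u then (if x = u then 1 else 0) else 0) = if P x then 1 else 0 := by
  rw [Finset.sum_eq_single x]
  · simp
  · intro u _ hux
    have : ¬ x = u := fun h => hux h.symm
    simp [this]
  · simp

lemma sum_cnt_fiber {V W : Type} [Fintype V] (q : V → W) (w : W) (s : Sym2 V) :
    (∑ u : V, if q u = w then cnt u s else 0) = cnt w (s.map q) := by
  induction s using Sym2.ind with
  | _ a b =>
    rw [Sym2.map_pair_eq, cnt_mk]
    have step : ∀ u : V, (if q u = w then cnt u s(a, b) else 0) =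
        (if q u = w then (if a = u then 1 else 0) else 0) +
        (if q u = w then (if b = u then 1 else 0) else 0) := by
      intro u; by_cases h : q u = w <;> simp [h, cnt_mk, eq_comm (a := u)]
    rw [Finset.sum_congr rfl (fun u _ => step u), Finset.sum_add_distrib,
      sum_ite_eq_single, sum_ite_eq_single]

lemma degrees_even_of_reduces (n : ℕ) (heven : Even n) (G : LabelledGraph)
    (hGfin : G.toMultigraph.IsFinite) (hreg : ∀ v : G.V, G.toMultigraph.degree v = n)
    (c : Multigraph) (hred : ReducesTo G c) (w : c.V) : Even (c.degree w) := by
  obtain ⟨q, fE, hsurj, hq, hends⟩ := hred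
  haveI : Finite G.E := hGfin.2
  haveI : Finite G.V := hGfin.1
  haveI := Fintype.ofFinite G.E
  haveI := Fintype.ofFinite G.V
  haveI : Fintype c.E := Fintype.ofEquiv _ fE
  set S : ℕ := ∑ u : G.V, if q u = w then G.toMultigraph.degree u else 0 with hS
  have hSeven : Even S := by
    rw [hS]
    refine Finset.even_sum (s := Finset.univ)
      (f := fun u => if q u = w then G.toMultigraph.degree u else 0) ?_
    intro u _
    by_cases h : q u = w <;> simp [h, hreg u, heven]
  have hS2 : S = ∑ e : G.E, cnt w ((G.toMultigraph.ends e).map q) := by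
    rw [hS]
    have : ∀ u : G.V, (if q u = w then G.toMultigraph.degree u else 0) =
        ∑ e : G.E, (if q u = w then cnt u (G.toMultigraph.ends e) else 0) := by
      intro u
      by_cases h : q u = w <;> simp [h, degree_eq_sum]
    rw [Finset.sum_congr rfl (fun u _ => this u), Finset.sum_comm]
    exact Finset.sum_congr rfl (fun e _ => sum_cnt_fiber q w _)
  have hsplit : S = (∑ e ∈ Finset.univ.filter G.virt, cnt w ((G.toMultigraph.ends e).map q))
      + (∑ e ∈ Finset.univ.filter (fun e => ¬ G.virt e), cnt w ((G.toMultigraph.ends e).map q)) := by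
    rw [hS2, Finset.sum_filter_add_sum_filter_not]
  have hvirtEven : Even (∑ e ∈ Finset.univ.filter G.virt, cnt w ((G.toMultigraph.ends e).map q)) := by
    refine Finset.even_sum (s := Finset.univ.filter G.virt)
      (f := fun e => cnt w ((G.toMultigraph.ends e).map q)) ?_
    intro e he
    have hv : G.virt e := by simpa using he
    obtain ⟨⟨a, b⟩, hab⟩ := Quot.exists_rep (G.toMultigraph.ends e)
    have hab' : G.toMultigraph.ends e = s(a, b) := hab.symm
    have hqab : q a = q b := (hq a b).mpr (Relation.ReflTransGen.single ⟨e, hv, hab'⟩)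
    show Even (cnt w (Sym2.map q (G.toMultigraph.ends e)))
    rw [hab', Sym2.map_pair_eq, cnt_mk, hqab]
    by_cases h : q b = w <;> simp [h]
  have hrealDeg : (∑ e ∈ Finset.univ.filter (fun e => ¬ G.virt e),
      cnt w ((G.toMultigraph.ends e).map q)) = c.degree w := by
    rw [degree_eq_sum,
      Finset.sum_subtype (p := fun e => ¬ G.virt e) (Finset.univ.filter (fun e => ¬ G.virt e))
        (by intro x; simp) (fun e => cnt w ((G.toMultigraph.ends e).map q)),
      ← Equiv.sum_comp fE (fun e' => cnt w (c.ends e'))]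
    exact Finset.sum_congr rfl (fun x _ => by rw [hends x])
  rw [hsplit] at hSeven
  rw [← hrealDeg]
  exact (Nat.even_add.mp hSeven).mp hvirtEven

section Blow

variable (c : Multigraph) (p : c.E → c.V × c.V) (μ : c.V → ℕ) (L : ℕ)

/-- endpoint of a dart -/
def ep (d : c.E × Bool) : c.V := if d.2 then (p d.1).1 else (p d.1).2

/-- fibre of darts over a vertex -/
abbrev Fib (v : c.V) := {d : c.E × Bool // ep c p d = v}

variable (σ : ∀ v : c.V, Fib c p v ≃ Fin (μ v + 1) × Bool)

/-- the blown-up labelled graph -/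
def Blow : LabelledGraph where
  V := c.E × Bool
  E := c.E ⊕ ((Σ v : c.V, Fin (μ v + 1) × Bool) ⊕ ((Σ v : c.V, Fin (μ v + 1)) ⊕ ((c.E × Bool) × Fin L)))
  ends := fun x =>
    match x with
    | .inl e => s((e, true), (e, false))
    | .inr (.inl ⟨v, j, b⟩) => s(((σ v).symm (j, b)).val, ((σ v).symm (j + 1, b)).val)
    | .inr (.inr (.inl ⟨v, j⟩)) => s(((σ v).symm (j, true)).val, ((σ v).symm (j, false)).val)
    | .inr (.inr (.inr ⟨d, _⟩)) => s(d, d)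
  virt := fun x => match x with | .inl _ => False | .inr _ => True

@[simp] lemma blow_V : (Blow c p μ L σ).V = (c.E × Bool) := rfl

@[simp] lemma blow_ends_real (e : c.E) :
    (Blow c p μ L σ).toMultigraph.ends (.inl e) = s((e, true), (e, false)) := rfl

@[simp] lemma blow_ends_cyc (v : c.V) (j : Fin (μ v + 1)) (b : Bool) :
    (Blow c p μ L σ).toMultigraph.ends (.inr (.inl ⟨v, j, b⟩)) =
      s(((σ v).symm (j, b)).val, ((σ v).symm (j + 1, b)).val) := rfl

@[simp] lemma blow_ends_chd (v : c.V) (j : Fin (μ v + 1)) :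
    (Blow c p μ L σ).toMultigraph.ends (.inr (.inr (.inl ⟨v, j⟩))) =
      s(((σ v).symm (j, true)).val, ((σ v).symm (j, false)).val) := rfl

@[simp] lemma blow_ends_lp (d : c.E × Bool) (i : Fin L) :
    (Blow c p μ L σ).toMultigraph.ends (.inr (.inr (.inr (d, i)))) = s(d, d) := rfl

@[simp] lemma blow_virt_real (e : c.E) : ¬ (Blow c p μ L σ).virt (.inl e) := fun h => h

@[simp] lemma blow_virt_inr (x) : (Blow c p μ L σ).virt (.inr x) := trivial

lemma blow_degree [Fintype c.V] [Fintype c.E] (d : c.E × Bool) :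
    (Blow c p μ L σ).toMultigraph.degree d = 4 + 2 * L := by
  letI : Fintype (Blow c p μ L σ).toMultigraph.E :=
    (inferInstance : Fintype (c.E ⊕ ((Σ v : c.V, Fin (μ v + 1) × Bool) ⊕
      ((Σ v : c.V, Fin (μ v + 1)) ⊕ ((c.E × Bool) × Fin L)))))
  set v₀ : c.V := ep c p d with hv₀
  have hd : ep c p d = v₀ := rfl
  set x₀ : Fin (μ v₀ + 1) × Bool := σ v₀ ⟨d, hd⟩ with hx₀
  have hval : ∀ v (x : Fin (μ v + 1) × Bool), v ≠ v₀ → ((σ v).symm x).val ≠ d := by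
    intro v x hv hEq
    exact hv (by rw [← ((σ v).symm x).prop, hEq])
  have hval₀ : ∀ x : Fin (μ v₀ + 1) × Bool, (((σ v₀).symm x).val = d) ↔ x = x₀ := by
    intro x
    constructor
    · intro h
      have : (σ v₀).symm x = ⟨d, hd⟩ := Subtype.ext h
      rw [Equiv.symm_apply_eq] at this
      rw [this]
    · intro h
      rw [h, hx₀, Equiv.symm_apply_apply]
  have hcast : (∑ e : (Blow c p μ L σ).toMultigraph.E,
      cnt d ((Blow c p μ L σ).toMultigraph.ends e)) =
      ∑ e : c.E ⊕ ((Σ v : c.V, Fin (μ v + 1) × Bool) ⊕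
        ((Σ v : c.V, Fin (μ v + 1)) ⊕ ((c.E × Bool) × Fin L))),
      cnt d ((Blow c p μ L σ).toMultigraph.ends e) :=
    Fintype.sum_equiv (Equiv.refl _) _ _ (fun _ => rfl)
  refine (degree_eq_sum (Blow c p μ L σ).toMultigraph d).trans (hcast.trans ?_)
  rw [Fintype.sum_sum_type, Fintype.sum_sum_type, Fintype.sum_sum_type]
  have Sreal : (∑ e : c.E, cnt d ((Blow c p μ L σ).toMultigraph.ends (.inl e))) = 1 := by
    have key : ∀ e : c.E, cnt d ((Blow c p μ L σ).toMultigraph.ends (.inl e)) =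
        if e = d.1 then 1 else 0 := by
      intro e
      rw [blow_ends_real, cnt_mk]
      rcases d with ⟨e₀, bb⟩
      by_cases h : e = e₀ <;> cases bb <;> simp [h, Prod.ext_iff]
    rw [Finset.sum_congr rfl fun e _ => key e]
    simp
  have Scyc : (∑ x : Σ v : c.V, Fin (μ v + 1) × Bool,
      cnt d ((Blow c p μ L σ).toMultigraph.ends (.inr (.inl x)))) = 2 := by
    rw [← Finset.univ_sigma_univ, Finset.sum_sigma]
    rw [Finset.sum_eq_single v₀]
    · have key : ∀ y : Fin (μ v₀ + 1) × Bool,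
          cnt d ((Blow c p μ L σ).toMultigraph.ends (.inr (.inl ⟨v₀, y⟩))) =
          (if y = x₀ then 1 else 0) + (if y = (x₀.1 - 1, x₀.2) then 1 else 0) := by
        rintro ⟨j, b⟩
        rw [show ((⟨v₀, (j, b)⟩ : Σ v : c.V, Fin (μ v + 1) × Bool)) = ⟨v₀, j, b⟩ from rfl]
        rw [blow_ends_cyc, cnt_mk]
        have h2 : (((σ v₀).symm (j + 1, b)).val = d) ↔ ((j, b) = (x₀.1 - 1, x₀.2)) := by
          rw [hval₀]
          rcases x₀ with ⟨j₀, b₀⟩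
          simp only [Prod.ext_iff, eq_sub_iff_add_eq]
        simp only [hval₀ (j, b), h2]
      rw [Finset.sum_congr rfl fun y _ => key y, Finset.sum_add_distrib]
      simp
    · intro v _ hv
      apply Finset.sum_eq_zero
      rintro ⟨j, b⟩ _
      rw [show ((⟨v, (j, b)⟩ : Σ v : c.V, Fin (μ v + 1) × Bool)) = ⟨v, j, b⟩ from rfl]
      rw [blow_ends_cyc, cnt_mk]
      rw [if_neg (hval v (j, b) hv), if_neg (hval v (j + 1, b) hv)]
      rfl
    · intro h; exact absurd (Finset.mem_univ v₀) h
  have Schd : (∑ x : Σ v : c.V, Fin (μ v + 1),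
      cnt d ((Blow c p μ L σ).toMultigraph.ends (.inr (.inr (.inl x))))) = 1 := by
    rw [← Finset.univ_sigma_univ, Finset.sum_sigma]
    rw [Finset.sum_eq_single v₀]
    · have key : ∀ j : Fin (μ v₀ + 1),
          cnt d ((Blow c p μ L σ).toMultigraph.ends (.inr (.inr (.inl ⟨v₀, j⟩)))) =
          (if (j, true) = x₀ then 1 else 0) + (if (j, false) = x₀ then 1 else 0) := by
        intro j
        rw [blow_ends_chd, cnt_mk]
        simp only [hval₀]
      rw [Finset.sum_congr rfl fun j _ => key j, Finset.sum_add_distrib]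
      rcases hb : x₀ with ⟨j₀, b₀⟩
      cases b₀ <;> simp [Prod.ext_iff]
    · intro v _ hv
      apply Finset.sum_eq_zero
      intro j _
      rw [blow_ends_chd, cnt_mk]
      rw [if_neg (hval v (j, true) hv), if_neg (hval v (j, false) hv)]
      rfl
    · intro h; exact absurd (Finset.mem_univ v₀) h
  have Slp : (∑ x : (c.E × Bool) × Fin L,
      cnt d ((Blow c p μ L σ).toMultigraph.ends (.inr (.inr (.inr x))))) = 2 * L := by
    have key : ∀ x : (c.E × Bool) × Fin L,
        cnt d ((Blow c p μ L σ).toMultigraph.ends (.inr (.inr (.inr x)))) =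
        if x.1 = d then 2 else 0 := by
      rintro ⟨d', i⟩
      rw [blow_ends_lp, cnt_mk]
      by_cases h : d' = d <;> simp [h]
    rw [Finset.sum_congr rfl fun x _ => key x]
    rw [Fintype.sum_prod_type, Finset.sum_comm]
    simp [Finset.sum_ite_eq', Finset.sum_const, mul_comm]
  rw [Sreal, Scyc, Schd, Slp]
  ring

end Blow

lemma virtAdj_symm (G : LabelledGraph) {u v : G.V} (h : G.VirtAdj u v) : G.VirtAdj v u := by
  obtain ⟨e, hv, he⟩ := h
  exact ⟨e, hv, by rw [he, Sym2.eq_swap]⟩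

section Blow2

open Fin.NatCast Fin.CommRing

variable (c : Multigraph) (p : c.E → c.V × c.V) (μ : c.V → ℕ) (L : ℕ)
variable (σ : ∀ v : c.V, Fib c p v ≃ Fin (μ v + 1) × Bool)

lemma blow_virt_ep {x : (Blow c p μ L σ).E} (hx : (Blow c p μ L σ).virt x)
    {u w : c.E × Bool} (hUW : (Blow c p μ L σ).toMultigraph.ends x = s(u, w)) :
    ep c p u = ep c p w := by
  match x with
  | .inl e => exact absurd hx (blow_virt_real c p μ L σ e)
  | .inr (.inl ⟨v, j, b⟩) =>
    rw [blow_ends_cyc] at hUW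
    replace hUW := Sym2.eq_iff.mp
      (show s(((σ v).symm (j, b)).val, ((σ v).symm (j + 1, b)).val) = s(u, w) from hUW)
    have h1 := ((σ v).symm (j, b)).prop
    have h2 := ((σ v).symm (j + 1, b)).prop
    rcases hUW with ⟨ha, hb⟩ | ⟨ha, hb⟩ <;> rw [← ha, ← hb] <;> rw [h1, h2]
  | .inr (.inr (.inl ⟨v, j⟩)) =>
    rw [blow_ends_chd] at hUW
    replace hUW := Sym2.eq_iff.mp
      (show s(((σ v).symm (j, true)).val, ((σ v).symm (j, false)).val) = s(u, w) from hUW)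
    have h1 := ((σ v).symm (j, true)).prop
    have h2 := ((σ v).symm (j, false)).prop
    rcases hUW with ⟨ha, hb⟩ | ⟨ha, hb⟩ <;> rw [← ha, ← hb] <;> rw [h1, h2]
  | .inr (.inr (.inr ⟨d, i⟩)) =>
    rw [blow_ends_lp] at hUW
    replace hUW := Sym2.eq_iff.mp (show s(d, d) = s(u, w) from hUW)
    rcases hUW with ⟨ha, hb⟩ | ⟨ha, hb⟩ <;> rw [← ha, ← hb]

lemma blow_cyc_adj (v : c.V) (j : Fin (μ v + 1)) (b : Bool) :
    (Blow c p μ L σ).VirtAdj ((σ v).symm (j, b)).val ((σ v).symm (j + 1, b)).val :=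
  ⟨.inr (.inl ⟨v, j, b⟩), trivial, rfl⟩

lemma blow_chd_adj (v : c.V) (j : Fin (μ v + 1)) :
    (Blow c p μ L σ).VirtAdj ((σ v).symm (j, true)).val ((σ v).symm (j, false)).val :=
  ⟨.inr (.inr (.inl ⟨v, j⟩)), trivial, rfl⟩

lemma blow_fib_conn (v : c.V) (x y : Fib c p v) :
    Relation.ReflTransGen (Blow c p μ L σ).VirtAdj x.val y.val := by
  have shift : ∀ (j : Fin (μ v + 1)) (b : Bool) (t : ℕ),
      Relation.ReflTransGen (Blow c p μ L σ).VirtAdj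
        ((σ v).symm (j, b)).val ((σ v).symm (j + (t : Fin (μ v + 1)), b)).val := by
    intro j b t
    induction t with
    | zero => rw [Nat.cast_zero, add_zero]; exact Relation.ReflTransGen.refl
    | succ t ih =>
      have hadj := blow_cyc_adj c p μ L σ v (j + (t : Fin (μ v + 1))) b
      have hstep : (j + ((t + 1 : ℕ) : Fin (μ v + 1))) = (j + (t : Fin (μ v + 1))) + 1 := by
        push_cast; ring
      rw [hstep]
      exact ih.tail hadj
  have same_b : ∀ (jx jy : Fin (μ v + 1)) (b : Bool),
      Relation.ReflTransGen (Blow c p μ L σ).VirtAdj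
        ((σ v).symm (jx, b)).val ((σ v).symm (jy, b)).val := by
    intro jx jy b
    have := shift jx b (jy - jx).val
    rwa [Fin.cast_val_eq_self, show jx + (jy - jx) = jy from by ring] at this
  have hx : x = (σ v).symm (σ v x) := (Equiv.symm_apply_apply _ _).symm
  have hy : y = (σ v).symm (σ v y) := (Equiv.symm_apply_apply _ _).symm
  rw [show x.val = ((σ v).symm (σ v x)).val from by rw [← hx],
    show y.val = ((σ v).symm (σ v y)).val from by rw [← hy]]
  rcases hsx : σ v x with ⟨jx, bx⟩
  rcases hsy : σ v y with ⟨jy, by'⟩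
  cases bx <;> cases by'
  · exact same_b jx jy false
  · exact (same_b jx jy false).tail (virtAdj_symm _ (blow_chd_adj c p μ L σ v jy))
  · exact (same_b jx jy true).tail (blow_chd_adj c p μ L σ v jy)
  · exact same_b jx jy true

lemma blow_q_iff (u w : c.E × Bool) :
    ep c p u = ep c p w ↔ Relation.ReflTransGen (Blow c p μ L σ).VirtAdj u w := by
  constructor
  · intro h
    have := blow_fib_conn c p μ L σ (ep c p u) ⟨u, rfl⟩ ⟨w, h.symm⟩
    exact this
  · intro h
    induction h with
    | refl => rfl
    | tail _ hadj ih =>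
      obtain ⟨e, hv, he⟩ := hadj
      exact ih.trans (blow_virt_ep c p μ L σ hv he)

/-- the real edges of the blow-up are the edges of `c` -/
def blowRealEquiv : {x : (Blow c p μ L σ).E // ¬ (Blow c p μ L σ).virt x} ≃ c.E where
  toFun x := match x with
    | ⟨.inl e, _⟩ => e
    | ⟨.inr _, h⟩ => absurd trivial h
  invFun e := ⟨.inl e, fun h => h⟩
  left_inv := by
    rintro ⟨x, hx⟩
    cases x with
    | inl e => rfl
    | inr y => exact absurd trivial hx
  right_inv e := rfl

lemma blow_reduces (hp : ∀ e, s((p e).1, (p e).2) = c.ends e)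
    (hne : ∀ v : c.V, Nonempty (Fib c p v)) :
    ReducesTo (Blow c p μ L σ) c := by
  refine ⟨ep c p, blowRealEquiv c p μ L σ, ?_, ?_, ?_⟩
  · intro v
    obtain ⟨d⟩ := hne v
    exact ⟨d.val, d.prop⟩
  · exact fun u w => blow_q_iff c p μ L σ u w
  · rintro ⟨x, hx⟩
    cases x with
    | inl e =>
      show c.ends e = Sym2.map (ep c p) s((e, true), (e, false))
      rw [Sym2.map_pair_eq, ← hp e]
      rfl
    | inr y => exact absurd trivial hx

lemma blow_connected (hp : ∀ e, s((p e).1, (p e).2) = c.ends e)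
    (hne : ∀ v : c.V, Nonempty (Fib c p v)) (hconn : c.Connected) :
    (Blow c p μ L σ).toMultigraph.Connected := by
  obtain ⟨⟨v⟩, hrtg⟩ := hconn
  obtain ⟨d0⟩ := hne v
  constructor
  · exact ⟨d0.val⟩
  · -- main claim
    have virt_to_adj : ∀ {a b : c.E × Bool},
        Relation.ReflTransGen (Blow c p μ L σ).VirtAdj a b →
        Relation.ReflTransGen (Blow c p μ L σ).toMultigraph.Adj a b := by
      intro a b h
      induction h with
      | refl => exact Relation.ReflTransGen.refl
      | tail _ hadj ih =>
        obtain ⟨e, _, he⟩ := hadj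
        exact ih.tail ⟨e, he⟩
    have fibwalk : ∀ (u : c.V) (x y : c.E × Bool), ep c p x = u → ep c p y = u →
        Relation.ReflTransGen (Blow c p μ L σ).toMultigraph.Adj x y := by
      intro u x y hx hy
      exact virt_to_adj (blow_fib_conn c p μ L σ u ⟨x, hx⟩ ⟨y, hy⟩)
    have main : ∀ (u w : c.V), Relation.ReflTransGen c.Adj u w →
        ∀ (x y : c.E × Bool), ep c p x = u → ep c p y = w →
        Relation.ReflTransGen (Blow c p μ L σ).toMultigraph.Adj x y := by
      intro u w h
      induction h with
      | refl => exact fun x y hx hy => fibwalk u x y hx hy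
      | @tail w' w'' _ hadj ih =>
        intro x y hx hy
        obtain ⟨e, he⟩ := hadj
        have hsym2 : s((p e).1, (p e).2) = s(w', w'') := by rw [hp e, he]
        rw [Sym2.eq_iff] at hsym2
        have hreal : (Blow c p μ L σ).toMultigraph.Adj (e, true) (e, false) :=
          ⟨.inl e, rfl⟩
        rcases hsym2 with ⟨h1, h2⟩ | ⟨h1, h2⟩
        · have : ep c p (e, true) = w' := h1
          have h2' : ep c p (e, false) = w'' := h2
          exact ((ih x (e, true) hx this).tail hreal).trans (fibwalk w'' (e, false) y h2' hy)
        · have : ep c p (e, false) = w' := h2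
          have h1' : ep c p (e, true) = w'' := h1
          exact ((ih x (e, false) hx this).trans
            (Relation.ReflTransGen.single ⟨.inl e, by rw [blow_ends_real]; exact Sym2.eq_swap⟩)).trans
            (fibwalk w'' (e, true) y h1' hy)
    intro x y
    exact main (ep c p x) (ep c p y) (hrtg _ _) x y rfl rfl

lemma card_fib [Fintype c.E] (hp : ∀ e, s((p e).1, (p e).2) = c.ends e) (v : c.V) :
    Nat.card (Fib c p v) = c.degree v := by
  have : Nat.card (Fib c p v) = Nat.card {d : c.E × Bool // ep c p d = v} := rfl
  rw [this, card_subtype_eq_sum, Fintype.sum_prod_type, degree_eq_sum]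
  refine Finset.sum_congr rfl fun e _ => ?_
  rw [Fintype.sum_bool, ← hp e, cnt_mk]
  have h1 : ep c p (e, true) = (p e).1 := rfl
  have h2 : ep c p (e, false) = (p e).2 := rfl
  rw [h1, h2]

end Blow2

lemma sym2_rep {V : Type} (s : Sym2 V) : ∃ pr : V × V, s(pr.1, pr.2) = s :=
  Sym2.ind (fun a b => ⟨(a, b), rfl⟩) s

/-- For `n` even, the reduction map `π_n` from finite connected labelled `n`-regular
multigraphs to finite connected multigraphs has image exactly the set of connected
multigraphs all of whose vertices have even degree. -/
theorem reduction_image_of_even (n : ℕ) (heven : Even n) (hn : 3 ≤ n)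
    (c : Multigraph) (hfin : c.IsFinite) (hconn : c.Connected) :
    (∃ G : LabelledGraph, G.toMultigraph.IsFinite ∧ G.toMultigraph.Connected ∧
      (∀ v : G.V, G.toMultigraph.degree v = n) ∧ ReducesTo G c) ↔
    (∀ v : c.V, Even (c.degree v)) := by
  constructor
  · rintro ⟨G, hGfin, _, hreg, hred⟩ v
    exact degrees_even_of_reduces n heven G hGfin hreg c hred v
  · intro hdeg
    haveI : Finite c.V := hfin.1
    haveI : Finite c.E := hfin.2
    haveI := Fintype.ofFinite c.V
    haveI := Fintype.ofFinite c.E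
    by_cases hIso : ∀ v : c.V, ∃ e : c.E, v ∈ c.ends e
    · -- main case: blow-up construction
      choose p hp using fun e => sym2_rep (c.ends e)
      have hne : ∀ v : c.V, Nonempty (Fib c p v) := by
        intro v
        obtain ⟨e, hv⟩ := hIso v
        rw [← hp e, Sym2.mem_iff] at hv
        rcases hv with h | h
        · exact ⟨⟨(e, true), h.symm⟩⟩
        · exact ⟨⟨(e, false), h.symm⟩⟩
      set μ : c.V → ℕ := fun v => c.degree v / 2 - 1 with hμ
      have hcard : ∀ v, Fintype.card (Fib c p v) = Fintype.card (Fin (μ v + 1) × Bool) := by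
        intro v
        have h1 : Nat.card (Fib c p v) = c.degree v := card_fib c p hp v
        rw [Nat.card_eq_fintype_card] at h1
        have hpos : 0 < Fintype.card (Fib c p v) := Fintype.card_pos_iff.mpr (hne v)
        obtain ⟨k, hk⟩ := hdeg v
        simp only [Fintype.card_prod, Fintype.card_fin, Fintype.card_bool, hμ]
        omega
      set σ : ∀ v : c.V, Fib c p v ≃ Fin (μ v + 1) × Bool :=
        fun v => Fintype.equivOfCardEq (hcard v) with hσ
      set L : ℕ := (n - 4) / 2 with hLdef
      have hL : 4 + 2 * L = n := by
        obtain ⟨k, hk⟩ := heven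
        omega
      refine ⟨Blow c p μ L σ, ⟨?_, ?_⟩, blow_connected c p μ L σ hp hne hconn,
        fun d => (blow_degree c p μ L σ d).trans hL, blow_reduces c p μ L σ hp hne⟩
      · exact inferInstanceAs (Finite (c.E × Bool))
      · exact inferInstanceAs (Finite (c.E ⊕ ((Σ v : c.V, Fin (μ v + 1) × Bool) ⊕
          ((Σ v : c.V, Fin (μ v + 1)) ⊕ ((c.E × Bool) × Fin L)))))
    · -- degenerate case: an isolated vertex
      push_neg at hIso
      obtain ⟨v₀, hv₀⟩ := hIso
      have hsingle : ∀ u : c.V, u = v₀ := by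
        intro u
        have h := hconn.2 v₀ u
        induction h with
        | refl => rfl
        | tail _ hadj ih =>
          obtain ⟨e, he⟩ := hadj
          rw [ih] at he
          exact absurd (by rw [he]; exact Sym2.mem_mk_left _ _) (hv₀ e)
      haveI hEempty : IsEmpty c.E := by
        constructor
        intro e
        obtain ⟨pr, hpr⟩ := sym2_rep (c.ends e)
        refine hv₀ e ?_
        rw [← hpr, hsingle pr.1]
        exact Sym2.mem_mk_left _ _
      obtain ⟨k, hk⟩ := heven
      refine ⟨⟨⟨c.V, Fin k, fun _ => s(v₀, v₀)⟩, fun _ => True⟩, ⟨hfin.1, Finite.of_fintype _⟩,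
        ⟨hconn.1, fun u w => by rw [hsingle u, hsingle w]⟩, ?_, ?_⟩
      · intro u
        show Nat.card {e : Fin k // u ∈ s(v₀, v₀)} + Nat.card {e : Fin k // s(v₀, v₀) = s(u, u)} = n
        rw [hsingle u]
        have h1 : ∀ e : Fin k, v₀ ∈ s(v₀, v₀) := fun _ => Sym2.mem_mk_left _ _
        rw [card_subtype_eq_sum, card_subtype_eq_sum]
        simp [Sym2.mem_mk_left, hk]
      · haveI : IsEmpty {e : Fin k // ¬ True} := ⟨fun x => x.prop trivial⟩
        refine ⟨id, Equiv.equivOfIsEmpty _ _, Function.surjective_id, ?_, ?_⟩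
        · intro u w
          constructor
          · intro h; rw [show u = w from h]
          · intro _; rw [hsingle u, hsingle w]
        · rintro ⟨e, he⟩
          exact absurd trivial he
end

section
/- Every spin foam molecule is a dimensionally homogeneous, strongly connected abstract simplicial 2-complex: each face is a triple of vertices (v, v̄, v̂) drawn from the three parts of a tripartite vertex set, all pairs within each face are edges of the complex, every vertex lies in at least one 2-face, and any two 2-faces are joined by a chain of 2-faces successively sharing an edge. -/
/-- A bisected boundary graph, presented bipartitely: boundary vertices `V̄`, bivalent
bisecting vertices `V̂`, and edges, each joining a boundary vertex (`src`) to a bisecting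
vertex (`tgt`); every bisecting vertex lies on exactly two edges, every boundary vertex
lies on at least one edge, and the graph is connected. -/
structure BBGraph where
  Vbar : Type
  Vhat : Type
  E : Type
  src : E → Vbar
  tgt : E → Vhat
  hat_bivalent : ∀ h : Vhat, Nat.card {e : E // tgt e = h} = 2
  bar_covered : ∀ v : Vbar, ∃ e : E, src e = v
  nonempty_hat : Nonempty Vhat
  conn : ∀ x y : Vbar ⊕ Vhat,
    Relation.ReflTransGen
      (fun a b => ∃ e : E, (a = Sum.inl (src e) ∧ b = Sum.inr (tgt e)) ∨
        (b = Sum.inl (src e) ∧ a = Sum.inr (tgt e))) x y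

section Aux

/-- Every bisecting vertex has an incident edge (it has two). -/
lemma BBGraph.exists_edge_tgt (b : BBGraph) (h : b.Vhat) : ∃ e : b.E, b.tgt e = h := by
  have hc := b.hat_bivalent h
  have : Nonempty {e : b.E // b.tgt e = h} := by
    by_contra hempty
    rw [not_nonempty_iff] at hempty
    rw [Nat.card_of_isEmpty] at hc
    omega
  obtain ⟨⟨e, he⟩⟩ := this
  exact ⟨e, he⟩

/-- Incidence of a vertex of the bipartite graph on an edge. -/
def BBGraph.Inc (b : BBGraph) (x : b.Vbar ⊕ b.Vhat) (g : b.E) : Prop :=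
  x = Sum.inl (b.src g) ∨ x = Sum.inr (b.tgt g)

lemma BBGraph.adj_of_inc (b : BBGraph) {x : b.Vbar ⊕ b.Vhat} {g g' : b.E}
    (h1 : b.Inc x g) (h2 : b.Inc x g') : b.src g = b.src g' ∨ b.tgt g = b.tgt g' := by
  rcases h1 with h1 | h1 <;> rcases h2 with h2 | h2 <;> rw [h1] at h2 <;>
    simp_all

/-- Edge connectivity from vertex connectivity. -/
lemma BBGraph.econn_of_conn (b : BBGraph) {x y : b.Vbar ⊕ b.Vhat}
    (h : Relation.ReflTransGen
      (fun a c => ∃ e : b.E, (a = Sum.inl (b.src e) ∧ c = Sum.inr (b.tgt e)) ∨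
        (c = Sum.inl (b.src e) ∧ a = Sum.inr (b.tgt e))) x y) :
    ∀ g g' : b.E, b.Inc x g → b.Inc y g' →
      Relation.ReflTransGen (fun g g' => b.src g = b.src g' ∨ b.tgt g = b.tgt g') g g' := by
  induction h with
  | refl => intro g g' h1 h2; exact Relation.ReflTransGen.single (b.adj_of_inc h1 h2)
  | @tail y' z' _ step ih =>
    intro g g' h1 h2
    obtain ⟨e, he⟩ := step
    have hib : b.Inc y' e := by
      rcases he with ⟨h, _⟩ | ⟨_, h⟩
      · exact Or.inl h
      · exact Or.inr h
    have hic : b.Inc z' e := by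
      rcases he with ⟨_, h⟩ | ⟨h, _⟩
      · exact Or.inr h
      · exact Or.inl h
    exact (ih g e h1 hib).trans (Relation.ReflTransGen.single (b.adj_of_inc hic h2))

lemma BBGraph.econn (b : BBGraph) (g g' : b.E) :
    Relation.ReflTransGen (fun g g' => b.src g = b.src g' ∨ b.tgt g = b.tgt g') g g' :=
  b.econn_of_conn (b.conn (Sum.inl (b.src g)) (Sum.inl (b.src g'))) g g'
    (Or.inl rfl) (Or.inl rfl)

end Aux

/-- A spin foam molecule: a collection of spin foam atoms (each determined by its bisected
boundary graph, with one bulk vertex and one triangular face per boundary edge) quotiented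
by bonding maps.  The bondings are recorded by the equivalence relations `idbar`, `idhat`,
`idE` identifying boundary vertices, bisecting vertices and boundary edges of the atoms,
compatibly with sources and targets, and identifying patches in full. -/
structure SFMolecule where
  ι : Type
  nonempty_atoms : Nonempty ι
  atom : ι → BBGraph
  idbar : Setoid (Σ i : ι, (atom i).Vbar)
  idhat : Setoid (Σ i : ι, (atom i).Vhat)
  idE : Setoid (Σ i : ι, (atom i).E)
  src_compat : ∀ e e' : Σ i : ι, (atom i).E, idE.r e e' →
    idbar.r ⟨e.1, (atom e.1).src e.2⟩ ⟨e'.1, (atom e'.1).src e'.2⟩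
  tgt_compat : ∀ e e' : Σ i : ι, (atom i).E, idE.r e e' →
    idhat.r ⟨e.1, (atom e.1).tgt e.2⟩ ⟨e'.1, (atom e'.1).tgt e'.2⟩
  patch_full : ∀ v v' : Σ i : ι, (atom i).Vbar, idbar.r v v' →
    ∀ e : (atom v.1).E, (atom v.1).src e = v.2 →
      ∃ e' : (atom v'.1).E, (atom v'.1).src e' = v'.2 ∧ idE.r ⟨v.1, e⟩ ⟨v'.1, e'⟩

namespace SFMolecule

/-- The vertices of the molecule: one bulk vertex per atom, together with the classes of
boundary vertices and of bisecting vertices (the tripartite vertex set `V ∪ V̄ ∪ V̂`). -/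
def Vtx (m : SFMolecule) : Type :=
  m.ι ⊕ (Quotient m.idbar ⊕ Quotient m.idhat)

/-- The 2-faces of the molecule: one triangle per boundary edge of each atom. -/
def Face (m : SFMolecule) : Type := Σ i : m.ι, (m.atom i).E

/-- The vertex set of a face: the triple `(v, v̄, v̂)`. -/
def verts (m : SFMolecule) (f : m.Face) : Set m.Vtx :=
  {Sum.inl f.1,
   Sum.inr (Sum.inl (Quotient.mk m.idbar ⟨f.1, (m.atom f.1).src f.2⟩)),
   Sum.inr (Sum.inr (Quotient.mk m.idhat ⟨f.1, (m.atom f.1).tgt f.2⟩))}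

/-- The simplices of the resulting complex: all subsets of vertex sets of faces. -/
def simplices (m : SFMolecule) : Set (Set m.Vtx) := {s | ∃ f : m.Face, s ⊆ m.verts f}

end SFMolecule

section MainAux

/-- The face-adjacency relation: sharing two distinct vertices (an edge). -/
def SFMolecule.FRel (m : SFMolecule) (a b : m.Face) : Prop :=
  ∃ x y : m.Vtx, x ≠ y ∧ x ∈ m.verts a ∧ y ∈ m.verts a ∧ x ∈ m.verts b ∧ y ∈ m.verts b

lemma SFMolecule.mem_verts_bulk (m : SFMolecule) (f : m.Face) :
    (Sum.inl f.1 : m.Vtx) ∈ m.verts f := Or.inl rfl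

lemma SFMolecule.mem_verts_bar (m : SFMolecule) (f : m.Face) :
    (Sum.inr (Sum.inl (Quotient.mk m.idbar ⟨f.1, (m.atom f.1).src f.2⟩)) : m.Vtx)
      ∈ m.verts f := Or.inr (Or.inl rfl)

lemma SFMolecule.mem_verts_hat (m : SFMolecule) (f : m.Face) :
    (Sum.inr (Sum.inr (Quotient.mk m.idhat ⟨f.1, (m.atom f.1).tgt f.2⟩)) : m.Vtx)
      ∈ m.verts f := Or.inr (Or.inr rfl)

/-- Faces from edges of the same atom sharing an endpoint are adjacent. -/
lemma SFMolecule.frel_same (m : SFMolecule) (i : m.ι) (g g' : (m.atom i).E)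
    (h : (m.atom i).src g = (m.atom i).src g' ∨ (m.atom i).tgt g = (m.atom i).tgt g') :
    m.FRel ⟨i, g⟩ ⟨i, g'⟩ := by
  rcases h with h | h
  · refine ⟨Sum.inl i, Sum.inr (Sum.inl (Quotient.mk m.idbar ⟨i, (m.atom i).src g⟩)),
      Sum.inl_ne_inr, m.mem_verts_bulk ⟨i, g⟩, m.mem_verts_bar ⟨i, g⟩, m.mem_verts_bulk ⟨i, g'⟩, ?_⟩
    rw [show (m.atom i).src g = (m.atom i).src g' from h]
    exact m.mem_verts_bar ⟨i, g'⟩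
  · refine ⟨Sum.inl i, Sum.inr (Sum.inr (Quotient.mk m.idhat ⟨i, (m.atom i).tgt g⟩)),
      Sum.inl_ne_inr, m.mem_verts_bulk ⟨i, g⟩, m.mem_verts_hat ⟨i, g⟩, m.mem_verts_bulk ⟨i, g'⟩, ?_⟩
    rw [show (m.atom i).tgt g = (m.atom i).tgt g' from h]
    exact m.mem_verts_hat ⟨i, g'⟩

/-- Any two faces within the same atom are connected. -/
lemma SFMolecule.frel_atom (m : SFMolecule) (i : m.ι) (g g' : (m.atom i).E) :
    Relation.ReflTransGen m.FRel ⟨i, g⟩ ⟨i, g'⟩ := by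
  have h := (m.atom i).econn g g'
  induction h with
  | refl => exact .refl
  | tail _ step ih => exact ih.tail (m.frel_same i _ _ step)

/-- Identified boundary edges give adjacent faces (sharing the bar and hat classes). -/
lemma SFMolecule.frel_bond (m : SFMolecule) (e e' : Σ i : m.ι, (m.atom i).E)
    (h : m.idE.r e e') : m.FRel e e' := by
  refine ⟨Sum.inr (Sum.inl (Quotient.mk m.idbar ⟨e.1, (m.atom e.1).src e.2⟩)),
    Sum.inr (Sum.inr (Quotient.mk m.idhat ⟨e.1, (m.atom e.1).tgt e.2⟩)),
    fun hxy => Sum.inl_ne_inr (Sum.inr.inj (α := m.ι) (β := Quotient m.idbar ⊕ Quotient m.idhat) hxy), m.mem_verts_bar e, m.mem_verts_hat e, ?_, ?_⟩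
  · rw [show Quotient.mk m.idbar ⟨e.1, (m.atom e.1).src e.2⟩ =
        Quotient.mk m.idbar ⟨e'.1, (m.atom e'.1).src e'.2⟩ from
      Quotient.sound (m.src_compat e e' h)]
    exact m.mem_verts_bar e'
  · rw [show Quotient.mk m.idhat ⟨e.1, (m.atom e.1).tgt e.2⟩ =
        Quotient.mk m.idhat ⟨e'.1, (m.atom e'.1).tgt e'.2⟩ from
      Quotient.sound (m.tgt_compat e e' h)]
    exact m.mem_verts_hat e'

end MainAux

/-- Every (connected) spin foam molecule is a dimensionally homogeneous, strongly
connected abstract simplicial 2-complex: each face is a triple of (distinct) vertices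
drawn from the three parts of the tripartite vertex set, all pairs within each face are
edges of the complex (the complex is downward closed), every vertex lies in at least one
2-face, and any two 2-faces are joined by a chain of 2-faces successively sharing an
edge. -/
theorem spinFoamMolecule_homogeneous_strongly_connected (m : SFMolecule)
    (hconn : ∀ i j : m.ι,
      Relation.ReflTransGen
        (fun a b => ∃ (va : (m.atom a).Vbar) (vb : (m.atom b).Vbar),
          m.idbar.r ⟨a, va⟩ ⟨b, vb⟩) i j) :
    (∀ s ∈ m.simplices, ∀ t : Set m.Vtx, t ⊆ s → t ∈ m.simplices) ∧
    (∀ f : m.Face, Nat.card ↥(m.verts f) = 3) ∧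
    (∀ f : m.Face, ∀ x ∈ m.verts f, ∀ y ∈ m.verts f, ({x, y} : Set m.Vtx) ∈ m.simplices) ∧
    (∀ v : m.Vtx, ∃ f : m.Face, v ∈ m.verts f) ∧
    (∀ f f' : m.Face,
      Relation.ReflTransGen
        (fun a b => ∃ x y : m.Vtx, x ≠ y ∧
          x ∈ m.verts a ∧ y ∈ m.verts a ∧ x ∈ m.verts b ∧ y ∈ m.verts b) f f') := by
  refine ⟨?_, ?_, ?_, ?_, ?_⟩
  · rintro s ⟨f, hs⟩ t ht
    exact ⟨f, ht.trans hs⟩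
  · intro f
    rw [Nat.card_coe_set_eq, SFMolecule.verts]
    show Set.ncard ({Sum.inl f.1, Sum.inr (Sum.inl (Quotient.mk m.idbar ⟨f.1, (m.atom f.1).src f.2⟩)),
      Sum.inr (Sum.inr (Quotient.mk m.idhat ⟨f.1, (m.atom f.1).tgt f.2⟩))} :
        Set (m.ι ⊕ (Quotient m.idbar ⊕ Quotient m.idhat))) = 3
    rw [Set.ncard_insert_of_notMem (by rintro (h | h | h) <;> exact Sum.inl_ne_inr h), Set.ncard_pair (fun hxy => Sum.inl_ne_inr (Sum.inr.inj (α := m.ι) (β := Quotient m.idbar ⊕ Quotient m.idhat) hxy))]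
  · rintro f x hx y hy
    refine ⟨f, ?_⟩
    rintro z (rfl | rfl) <;> assumption
  · rintro (i | q | q)
    · obtain ⟨h⟩ := (m.atom i).nonempty_hat
      obtain ⟨e, -⟩ := (m.atom i).exists_edge_tgt h
      exact ⟨⟨i, e⟩, m.mem_verts_bulk ⟨i, e⟩⟩
    · induction q using Quotient.inductionOn with
      | h a =>
        obtain ⟨i, v⟩ := a
        obtain ⟨e, he⟩ := (m.atom i).bar_covered v
        subst he
        exact ⟨⟨i, e⟩, m.mem_verts_bar ⟨i, e⟩⟩
    · induction q using Quotient.inductionOn with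
      | h a =>
        obtain ⟨i, v⟩ := a
        obtain ⟨e, he⟩ := (m.atom i).exists_edge_tgt v
        subst he
        exact ⟨⟨i, e⟩, m.mem_verts_hat ⟨i, e⟩⟩
  · rintro ⟨i, e⟩ ⟨i', e'⟩
    have key : ∀ j, Relation.ReflTransGen
        (fun a b => ∃ va vb, m.idbar.r ⟨a, va⟩ ⟨b, vb⟩) i j →
        ∀ e'' : (m.atom j).E, Relation.ReflTransGen m.FRel ⟨i, e⟩ ⟨j, e''⟩ := by
      intro j hj
      induction hj with
      | refl => exact m.frel_atom i e
      | @tail b c _ step ih =>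
        intro e''
        obtain ⟨vb, vc, hr⟩ := step
        obtain ⟨eb, heb⟩ := (m.atom b).bar_covered vb
        obtain ⟨ec, hec, hide⟩ := m.patch_full ⟨b, vb⟩ ⟨c, vc⟩ hr eb heb
        exact ((ih eb).tail (m.frel_bond ⟨b, eb⟩ ⟨c, ec⟩ hide)).trans (m.frel_atom c ec e'')
    exact key i' (hconn i i') e'
end

section
/- Let c be a connected multigraph in which every vertex has degree n, and suppose c has at least one loop at some vertex v̄ with at most ⌊n/2⌋ loops at v̄. Then there is a sequence of expansion and creation moves (a (1–n)-move) producing a labelled n-regular multigraph c' with strictly fewer loops than c that reduces back to c under contraction and deletion of the added virtual edges; iterating, every labelled n-regular graph class π_n⁻¹(c) contains a loopless representative. -/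
open Classical

namespace OneNMove

theorem card_split {α : Type} [Finite α] (P Q : α → Prop) (h : ∀ a, Q a → P a) :
    Nat.card {a // P a} = Nat.card {a // Q a} + Nat.card {a // P a ∧ ¬ Q a} := by
  classical
  have e : {a // P a} ≃ {a // Q a} ⊕ {a // P a ∧ ¬ Q a} :=
  { toFun := fun x => if hq : Q x.1 then Sum.inl ⟨x.1, hq⟩ else Sum.inr ⟨x.1, x.2, hq⟩
    invFun := fun x => match x with
      | Sum.inl y => ⟨y.1, h _ y.2⟩
      | Sum.inr y => ⟨y.1, y.2.1⟩
    left_inv := by intro x; by_cases hq : Q x.1 <;> simp [hq]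
    right_inv := by
      rintro (y | y)
      · simp [y.2]
      · simp [y.2.2] }
  rw [Nat.card_congr e, Nat.card_sum]

theorem card_subtype_sum {α β : Type} [Finite α] [Finite β] (P : α ⊕ β → Prop) :
    Nat.card {x // P x} = Nat.card {a // P (Sum.inl a)} + Nat.card {b // P (Sum.inr b)} := by
  rw [Nat.card_congr (Equiv.subtypeSum), Nat.card_sum]

theorem rtg_lift {α β : Type} {r : α → α → Prop} {r' : β → β → Prop} (f : α → β)
    (hf : ∀ x y, r x y → Relation.ReflTransGen r' (f x) (f y)) {a b : α}
    (h : Relation.ReflTransGen r a b) : Relation.ReflTransGen r' (f a) (f b) := by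
  induction h with
  | refl => exact .refl
  | tail _ hstep ih => exact ih.trans (hf _ _ hstep)

variable (G : LabelledGraph) (w : G.V)

abbrev Vm : Type := {v : G.V // v ≠ w} ⊕ Fin 3

def NE : Type := {e : G.E // w ∈ G.toMultigraph.ends e ∧ ¬ G.toMultigraph.ends e = s(w, w)}
def LE : Type := {e : G.E // G.toMultigraph.ends e = s(w, w)}

def Em : Type := G.E ⊕ (NE G w ⊕ (LE G w ⊕ LE G w))

noncomputable def psi (v : G.V) : Vm G w :=
  if h : v = w then Sum.inr 2 else Sum.inl ⟨v, h⟩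

theorem psi_w : psi G w w = Sum.inr 2 := by simp [psi]

theorem psi_ne (v : G.V) (h : v ≠ w) : psi G w v = Sum.inl ⟨v, h⟩ := by simp [psi, h]

theorem psi_inj : Function.Injective (psi G w) := by
  intro a b hab
  by_cases ha : a = w <;> by_cases hb : b = w
  · exact ha.trans hb.symm
  · simp [psi, ha, hb] at hab
  · simp [psi, ha, hb] at hab
  · simp only [psi, ha, hb, dif_neg, not_false_iff] at hab
    exact Subtype.ext_iff.mp (Sum.inl.inj hab)

theorem psi_ne_inr0 (v : G.V) : psi G w v ≠ Sum.inr 0 := by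
  by_cases h : v = w <;> simp [psi, h]

theorem psi_ne_inr1 (v : G.V) : psi G w v ≠ Sum.inr 1 := by
  by_cases h : v = w <;> simp [psi, h]

theorem psi_eq_inr2 {v : G.V} : psi G w v = Sum.inr 2 ↔ v = w := by
  by_cases h : v = w <;> simp [psi, h]

noncomputable def moveEnds : Em G w → Sym2 (Vm G w)
  | Sum.inl e => if G.toMultigraph.ends e = s(w, w) then s(Sum.inr 0, Sum.inr 1)
      else (G.toMultigraph.ends e).map (psi G w)
  | Sum.inr (Sum.inl _) => s(Sum.inr 0, Sum.inr 1)
  | Sum.inr (Sum.inr (Sum.inl _)) => s(Sum.inr 0, Sum.inr 2)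
  | Sum.inr (Sum.inr (Sum.inr _)) => s(Sum.inr 1, Sum.inr 2)

def moveVirt : Em G w → Prop
  | Sum.inl e => G.virt e
  | Sum.inr _ => True

noncomputable def moveG : LabelledGraph := ⟨⟨Vm G w, Em G w, moveEnds G w⟩, moveVirt G w⟩

theorem psi_eq_inl {a v : G.V} (hv : v ≠ w) : psi G w a = Sum.inl ⟨v, hv⟩ ↔ a = v := by
  constructor
  · intro h
    by_cases ha : a = w
    · rw [ha, psi_w] at h; exact absurd h (by simp)
    · rw [psi_ne G w a ha] at h
      exact Subtype.ext_iff.mp (Sum.inl.inj h)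
  · rintro rfl; exact psi_ne G w a hv

theorem mem_map_psi_inl {z : Sym2 G.V} {v : G.V} (hv : v ≠ w) :
    Sum.inl ⟨v, hv⟩ ∈ z.map (psi G w) ↔ v ∈ z := by
  rw [Sym2.mem_map]
  constructor
  · rintro ⟨a, ha, hpa⟩
    rw [psi_eq_inl G w hv] at hpa
    exact hpa ▸ ha
  · intro hz; exact ⟨v, hz, psi_ne G w v hv⟩

theorem mem_map_psi_inr2 {z : Sym2 G.V} :
    Sum.inr 2 ∈ z.map (psi G w) ↔ w ∈ z := by
  rw [Sym2.mem_map]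
  constructor
  · rintro ⟨a, ha, hpa⟩
    rw [psi_eq_inr2] at hpa
    exact hpa ▸ ha
  · intro hz; exact ⟨w, hz, psi_w G w⟩

theorem not_mem_map_psi_inr0 {z : Sym2 G.V} : Sum.inr 0 ∉ z.map (psi G w) := by
  rw [Sym2.mem_map]
  rintro ⟨a, _, hpa⟩
  exact psi_ne_inr0 G w a hpa

theorem not_mem_map_psi_inr1 {z : Sym2 G.V} : Sum.inr 1 ∉ z.map (psi G w) := by
  rw [Sym2.mem_map]
  rintro ⟨a, _, hpa⟩
  exact psi_ne_inr1 G w a hpa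

theorem map_psi_loop {z : Sym2 G.V} {x : Vm G w} :
    z.map (psi G w) = s(x, x) ↔ ∃ a, z = s(a, a) ∧ psi G w a = x := by
  induction z with
  | _ a b =>
    rw [Sym2.map_pair_eq, Sym2.eq_iff]
    constructor
    · rintro (⟨h1, h2⟩ | ⟨h1, h2⟩) <;>
      · obtain rfl : a = b := psi_inj G w (h1.trans h2.symm)
        exact ⟨a, rfl, h1⟩
    · rintro ⟨c, hz, hp⟩
      obtain ⟨rfl, rfl⟩ : a = c ∧ b = c := by
        rcases Sym2.eq_iff.mp hz with ⟨h1, h2⟩ | ⟨h1, h2⟩ <;> exact ⟨h1, h2⟩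
      exact Or.inl ⟨hp, hp⟩

theorem pair_ne_loop {i j : Fin 3} (hij : i ≠ j) (x : Vm G w) :
    s((Sum.inr i : Vm G w), Sum.inr j) ≠ s(x, x) := by
  intro hc
  rcases Sym2.eq_iff.mp hc with ⟨h1, h2⟩ | ⟨h1, h2⟩ <;>
    exact hij (Sum.inr.inj (h1.trans h2.symm))

theorem mem_moveEnds_inl_iff (e : G.E) {v : G.V} (hv : v ≠ w) :
    (Sum.inl ⟨v, hv⟩ : Vm G w) ∈ moveEnds G w (Sum.inl e) ↔ v ∈ G.toMultigraph.ends e := by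
  simp only [moveEnds]
  split_ifs with h
  · rw [h]
    simp [Sym2.mem_iff, hv]
  · exact mem_map_psi_inl G w hv

theorem moveEnds_inl_eq_loop_iff (e : G.E) {v : G.V} (hv : v ≠ w) :
    moveEnds G w (Sum.inl e) = s(Sum.inl ⟨v, hv⟩, Sum.inl ⟨v, hv⟩) ↔
      G.toMultigraph.ends e = s(v, v) := by
  simp only [moveEnds]
  split_ifs with h
  · constructor
    · intro hc
      rcases Sym2.eq_iff.mp hc with ⟨h1, _⟩ | ⟨h1, _⟩ <;> exact absurd h1 (by simp)
    · intro hc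
      rw [h] at hc
      rcases Sym2.eq_iff.mp hc with ⟨h1, _⟩ | ⟨h1, _⟩ <;>
        exact absurd h1.symm hv
  · rw [map_psi_loop]
    constructor
    · rintro ⟨a, hz, hp⟩
      rw [psi_eq_inl G w hv] at hp
      exact hp ▸ hz
    · intro hz
      exact ⟨v, hz, psi_ne G w v hv⟩

theorem mem_moveEnds_inl_inr0 (e : G.E) :
    (Sum.inr 0 : Vm G w) ∈ moveEnds G w (Sum.inl e) ↔ G.toMultigraph.ends e = s(w, w) := by
  simp only [moveEnds]
  split_ifs with h
  · exact iff_of_true (Sym2.mem_iff.mpr (Or.inl rfl)) h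
  · exact iff_of_false (not_mem_map_psi_inr0 G w) h

theorem mem_moveEnds_inl_inr1 (e : G.E) :
    (Sum.inr 1 : Vm G w) ∈ moveEnds G w (Sum.inl e) ↔ G.toMultigraph.ends e = s(w, w) := by
  simp only [moveEnds]
  split_ifs with h
  · exact iff_of_true (Sym2.mem_iff.mpr (Or.inr rfl)) h
  · exact iff_of_false (not_mem_map_psi_inr1 G w) h

theorem mem_moveEnds_inl_inr2 (e : G.E) :
    (Sum.inr 2 : Vm G w) ∈ moveEnds G w (Sum.inl e) ↔
      (w ∈ G.toMultigraph.ends e ∧ ¬ G.toMultigraph.ends e = s(w, w)) := by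
  simp only [moveEnds]
  split_ifs with h
  · constructor
    · intro hc
      rcases Sym2.mem_iff.mp hc with h1 | h1 <;>
        exact absurd (Sum.inr.inj h1) (by decide)
    · rintro ⟨_, hn⟩; exact absurd h hn
  · rw [mem_map_psi_inr2]
    exact ⟨fun hw => ⟨hw, h⟩, fun hw => hw.1⟩

theorem moveEnds_inl_ne_loop_inr (e : G.E) (i : Fin 3) :
    moveEnds G w (Sum.inl e) ≠ s(Sum.inr i, Sum.inr i) := by
  simp only [moveEnds]
  split_ifs with h
  · exact pair_ne_loop G w (by decide) _
  · intro hc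
    obtain ⟨a, hz, hp⟩ := (map_psi_loop G w).mp hc
    by_cases ha : a = w
    · rw [ha] at hz; exact h hz
    · rw [psi_ne G w a ha] at hp
      exact absurd hp (by simp)

theorem moveEnds_inl_loop_iff (e : G.E) :
    (∃ x : Vm G w, moveEnds G w (Sum.inl e) = s(x, x)) ↔
      ((∃ a, G.toMultigraph.ends e = s(a, a)) ∧ ¬ G.toMultigraph.ends e = s(w, w)) := by
  simp only [moveEnds]
  split_ifs with h
  · exact iff_of_false (fun ⟨x, hx⟩ => pair_ne_loop G w (by decide) x hx)
      (fun ⟨_, hn⟩ => hn h)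
  · constructor
    · rintro ⟨x, hx⟩
      obtain ⟨a, hz, _⟩ := (map_psi_loop G w).mp hx
      exact ⟨⟨a, hz⟩, h⟩
    · rintro ⟨⟨a, hz⟩, _⟩
      exact ⟨psi G w a, (map_psi_loop G w).mpr ⟨a, hz, rfl⟩⟩

theorem card_Em [Finite G.E] (P : Em G w → Prop) :
    Nat.card {x : Em G w // P x} =
      Nat.card {e : G.E // P (Sum.inl e)} +
      (Nat.card {a : NE G w // P (Sum.inr (Sum.inl a))} +
      (Nat.card {a : LE G w // P (Sum.inr (Sum.inr (Sum.inl a)))} +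
       Nat.card {a : LE G w // P (Sum.inr (Sum.inr (Sum.inr a)))})) := by
  haveI : Finite (NE G w) := Subtype.finite
  haveI : Finite (LE G w) := Subtype.finite
  have h1 := card_subtype_sum (α := G.E) (β := NE G w ⊕ (LE G w ⊕ LE G w)) P
  have h2 := card_subtype_sum (α := NE G w) (β := LE G w ⊕ LE G w)
    (fun y => P (Sum.inr y))
  have h3 := card_subtype_sum (α := LE G w) (β := LE G w)
    (fun y => P (Sum.inr (Sum.inr y)))
  rw [h2, h3] at h1
  exact h1

theorem card_NE [Finite G.E] :
    Nat.card {e : G.E // w ∈ G.toMultigraph.ends e} =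
      Nat.card (LE G w) + Nat.card (NE G w) := by
  have h := card_split (fun e : G.E => w ∈ G.toMultigraph.ends e)
    (fun e : G.E => G.toMultigraph.ends e = s(w, w))
    (fun e he => by
      show w ∈ G.toMultigraph.ends e
      rw [show G.toMultigraph.ends e = s(w, w) from he]
      exact Sym2.mem_iff.mpr (Or.inl rfl))
  exact h

theorem degree_inl [Finite G.E] (v : G.V) (hv : v ≠ w) :
    (moveG G w).toMultigraph.degree (Sum.inl ⟨v, hv⟩) = G.toMultigraph.degree v := by
  show Nat.card {e : Em G w // (Sum.inl ⟨v, hv⟩ : Vm G w) ∈ moveEnds G w e} +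
       Nat.card {e : Em G w // moveEnds G w e = s(Sum.inl ⟨v, hv⟩, Sum.inl ⟨v, hv⟩)} =
       G.toMultigraph.degree v
  rw [card_Em, card_Em]
  have c1 : Nat.card {e : G.E // (Sum.inl ⟨v, hv⟩ : Vm G w) ∈ moveEnds G w (Sum.inl e)} =
      Nat.card {e : G.E // v ∈ G.toMultigraph.ends e} :=
    Nat.card_congr (Equiv.subtypeEquivRight fun e => mem_moveEnds_inl_iff G w e hv)
  have c2 : Nat.card {e : G.E // moveEnds G w (Sum.inl e) =
      s(Sum.inl ⟨v, hv⟩, Sum.inl ⟨v, hv⟩)} =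
      Nat.card {e : G.E // G.toMultigraph.ends e = s(v, v)} :=
    Nat.card_congr (Equiv.subtypeEquivRight fun e => moveEnds_inl_eq_loop_iff G w e hv)
  have z1 : ∀ (y : NE G w ⊕ (LE G w ⊕ LE G w)),
      (Sum.inl ⟨v, hv⟩ : Vm G w) ∉ moveEnds G w (Sum.inr y) := by
    rintro (a | a | a) hc <;>
    · simp only [moveEnds] at hc
      rcases Sym2.mem_iff.mp hc with h1 | h1 <;> exact absurd h1 (by simp)
  have z2 : ∀ (y : NE G w ⊕ (LE G w ⊕ LE G w)),
      moveEnds G w (Sum.inr y) ≠ s(Sum.inl ⟨v, hv⟩, Sum.inl ⟨v, hv⟩) := by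
    rintro (a | a | a) hc <;>
    · simp only [moveEnds] at hc
      rcases Sym2.eq_iff.mp hc with ⟨h1, _⟩ | ⟨h1, _⟩ <;> exact absurd h1 (by simp)
  rw [c1, c2]
  have e1 : Nat.card {a : NE G w // (Sum.inl ⟨v, hv⟩ : Vm G w) ∈
      moveEnds G w (Sum.inr (Sum.inl a))} = 0 :=
    Nat.card_eq_zero.mpr (Or.inl ⟨fun x => z1 _ x.2⟩)
  have e2 : Nat.card {a : LE G w // (Sum.inl ⟨v, hv⟩ : Vm G w) ∈
      moveEnds G w (Sum.inr (Sum.inr (Sum.inl a)))} = 0 :=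
    Nat.card_eq_zero.mpr (Or.inl ⟨fun x => z1 _ x.2⟩)
  have e3 : Nat.card {a : LE G w // (Sum.inl ⟨v, hv⟩ : Vm G w) ∈
      moveEnds G w (Sum.inr (Sum.inr (Sum.inr a)))} = 0 :=
    Nat.card_eq_zero.mpr (Or.inl ⟨fun x => z1 _ x.2⟩)
  have f1 : Nat.card {a : NE G w // moveEnds G w (Sum.inr (Sum.inl a)) =
      s(Sum.inl ⟨v, hv⟩, Sum.inl ⟨v, hv⟩)} = 0 :=
    Nat.card_eq_zero.mpr (Or.inl ⟨fun x => z2 _ x.2⟩)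
  have f2 : Nat.card {a : LE G w // moveEnds G w (Sum.inr (Sum.inr (Sum.inl a))) =
      s(Sum.inl ⟨v, hv⟩, Sum.inl ⟨v, hv⟩)} = 0 :=
    Nat.card_eq_zero.mpr (Or.inl ⟨fun x => z2 _ x.2⟩)
  have f3 : Nat.card {a : LE G w // moveEnds G w (Sum.inr (Sum.inr (Sum.inr a))) =
      s(Sum.inl ⟨v, hv⟩, Sum.inl ⟨v, hv⟩)} = 0 :=
    Nat.card_eq_zero.mpr (Or.inl ⟨fun x => z2 _ x.2⟩)
  rw [e1, e2, e3, f1, f2, f3, Multigraph.degree]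
  omega

theorem card_true {α : Type} [Finite α] (P : α → Prop) (hP : ∀ a, P a) :
    Nat.card {a // P a} = Nat.card α :=
  Nat.card_congr (Equiv.subtypeUnivEquiv hP)

theorem card_false {α : Type} [Finite α] (P : α → Prop) (hP : ∀ a, ¬ P a) :
    Nat.card {a // P a} = 0 :=
  Nat.card_eq_zero.mpr (Or.inl ⟨fun x => hP x.1 x.2⟩)

theorem card_loop_zero {α : Type} [Finite α] (f : α → Sym2 (Vm G w)) {j l : Fin 3}
    (hjl : j ≠ l) (hf : ∀ a, f a = s(Sum.inr j, Sum.inr l)) (x : Vm G w) :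
    Nat.card {a : α // f a = s(x, x)} = 0 :=
  card_false _ (fun a hc => pair_ne_loop G w hjl x ((hf a) ▸ hc))

theorem mem_pair_iff (i j l : Fin 3) :
    ((Sum.inr i : Vm G w) ∈ s((Sum.inr j : Vm G w), Sum.inr l)) ↔ (i = j ∨ i = l) := by
  rw [Sym2.mem_iff]
  constructor
  · rintro (h | h)
    · exact Or.inl (Sum.inr.inj h)
    · exact Or.inr (Sum.inr.inj h)
  · rintro (rfl | rfl)
    · exact Or.inl rfl
    · exact Or.inr rfl

theorem degree_inr0 [Finite G.E] :
    (moveG G w).toMultigraph.degree (Sum.inr 0) =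
      Nat.card (LE G w) + Nat.card (LE G w) + Nat.card (NE G w) := by
  haveI : Finite (NE G w) := Subtype.finite
  haveI : Finite (LE G w) := Subtype.finite
  show Nat.card {e : Em G w // (Sum.inr 0 : Vm G w) ∈ moveEnds G w e} +
       Nat.card {e : Em G w // moveEnds G w e = s(Sum.inr 0, Sum.inr 0)} = _
  rw [card_Em, card_Em]
  rw [card_false (fun e : G.E => moveEnds G w (Sum.inl e) = s(Sum.inr 0, Sum.inr 0))
      (fun e => moveEnds_inl_ne_loop_inr G w e 0),
    card_loop_zero G w (fun a : NE G w => moveEnds G w (Sum.inr (Sum.inl a)))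
      (show (0:Fin 3) ≠ 1 by decide) (fun a => rfl) _,
    card_loop_zero G w (fun a : LE G w => moveEnds G w (Sum.inr (Sum.inr (Sum.inl a))))
      (show (0:Fin 3) ≠ 2 by decide) (fun a => rfl) _,
    card_loop_zero G w (fun a : LE G w => moveEnds G w (Sum.inr (Sum.inr (Sum.inr a))))
      (show (1:Fin 3) ≠ 2 by decide) (fun a => rfl) _]
  rw [Nat.card_congr (Equiv.subtypeEquivRight fun e => mem_moveEnds_inl_inr0 G w e)]
  rw [card_true (fun a : NE G w => (Sum.inr 0 : Vm G w) ∈ moveEnds G w (Sum.inr (Sum.inl a)))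
      (fun a => (mem_pair_iff G w 0 0 1).mpr (Or.inl rfl)),
    card_true (fun a : LE G w => (Sum.inr 0 : Vm G w) ∈ moveEnds G w (Sum.inr (Sum.inr (Sum.inl a))))
      (fun a => (mem_pair_iff G w 0 0 2).mpr (Or.inl rfl)),
    card_false (fun a : LE G w => (Sum.inr 0 : Vm G w) ∈ moveEnds G w (Sum.inr (Sum.inr (Sum.inr a))))
      (fun a hc => by rcases (mem_pair_iff G w 0 1 2).mp hc with h | h <;> exact absurd h (by decide))]
  have hL : Nat.card {x : G.E // G.toMultigraph.ends x = s(w, w)} = Nat.card (LE G w) := rfl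
  have hN : Nat.card {x : G.E // w ∈ G.toMultigraph.ends x ∧ ¬ G.toMultigraph.ends x = s(w, w)} = Nat.card (NE G w) := rfl
  omega

theorem degree_inr1 [Finite G.E] :
    (moveG G w).toMultigraph.degree (Sum.inr 1) =
      Nat.card (LE G w) + Nat.card (LE G w) + Nat.card (NE G w) := by
  haveI : Finite (NE G w) := Subtype.finite
  haveI : Finite (LE G w) := Subtype.finite
  show Nat.card {e : Em G w // (Sum.inr 1 : Vm G w) ∈ moveEnds G w e} +
       Nat.card {e : Em G w // moveEnds G w e = s(Sum.inr 1, Sum.inr 1)} = _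
  rw [card_Em, card_Em]
  rw [card_false (fun e : G.E => moveEnds G w (Sum.inl e) = s(Sum.inr 1, Sum.inr 1))
      (fun e => moveEnds_inl_ne_loop_inr G w e 1),
    card_loop_zero G w (fun a : NE G w => moveEnds G w (Sum.inr (Sum.inl a)))
      (show (0:Fin 3) ≠ 1 by decide) (fun a => rfl) _,
    card_loop_zero G w (fun a : LE G w => moveEnds G w (Sum.inr (Sum.inr (Sum.inl a))))
      (show (0:Fin 3) ≠ 2 by decide) (fun a => rfl) _,
    card_loop_zero G w (fun a : LE G w => moveEnds G w (Sum.inr (Sum.inr (Sum.inr a))))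
      (show (1:Fin 3) ≠ 2 by decide) (fun a => rfl) _]
  rw [Nat.card_congr (Equiv.subtypeEquivRight fun e => mem_moveEnds_inl_inr1 G w e)]
  rw [card_true (fun a : NE G w => (Sum.inr 1 : Vm G w) ∈ moveEnds G w (Sum.inr (Sum.inl a)))
      (fun a => (mem_pair_iff G w 1 0 1).mpr (Or.inr rfl)),
    card_false (fun a : LE G w => (Sum.inr 1 : Vm G w) ∈ moveEnds G w (Sum.inr (Sum.inr (Sum.inl a))))
      (fun a hc => by rcases (mem_pair_iff G w 1 0 2).mp hc with h | h <;> exact absurd h (by decide)),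
    card_true (fun a : LE G w => (Sum.inr 1 : Vm G w) ∈ moveEnds G w (Sum.inr (Sum.inr (Sum.inr a))))
      (fun a => (mem_pair_iff G w 1 1 2).mpr (Or.inl rfl))]
  have hL : Nat.card {x : G.E // G.toMultigraph.ends x = s(w, w)} = Nat.card (LE G w) := rfl
  have hN : Nat.card {x : G.E // w ∈ G.toMultigraph.ends x ∧ ¬ G.toMultigraph.ends x = s(w, w)} = Nat.card (NE G w) := rfl
  omega

theorem degree_inr2 [Finite G.E] :
    (moveG G w).toMultigraph.degree (Sum.inr 2) =
      Nat.card (NE G w) + Nat.card (LE G w) + Nat.card (LE G w) := by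
  haveI : Finite (NE G w) := Subtype.finite
  haveI : Finite (LE G w) := Subtype.finite
  show Nat.card {e : Em G w // (Sum.inr 2 : Vm G w) ∈ moveEnds G w e} +
       Nat.card {e : Em G w // moveEnds G w e = s(Sum.inr 2, Sum.inr 2)} = _
  rw [card_Em, card_Em]
  rw [card_false (fun e : G.E => moveEnds G w (Sum.inl e) = s(Sum.inr 2, Sum.inr 2))
      (fun e => moveEnds_inl_ne_loop_inr G w e 2),
    card_loop_zero G w (fun a : NE G w => moveEnds G w (Sum.inr (Sum.inl a)))
      (show (0:Fin 3) ≠ 1 by decide) (fun a => rfl) _,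
    card_loop_zero G w (fun a : LE G w => moveEnds G w (Sum.inr (Sum.inr (Sum.inl a))))
      (show (0:Fin 3) ≠ 2 by decide) (fun a => rfl) _,
    card_loop_zero G w (fun a : LE G w => moveEnds G w (Sum.inr (Sum.inr (Sum.inr a))))
      (show (1:Fin 3) ≠ 2 by decide) (fun a => rfl) _]
  rw [Nat.card_congr (Equiv.subtypeEquivRight fun e => mem_moveEnds_inl_inr2 G w e)]
  rw [card_false (fun a : NE G w => (Sum.inr 2 : Vm G w) ∈ moveEnds G w (Sum.inr (Sum.inl a)))
      (fun a hc => by rcases (mem_pair_iff G w 2 0 1).mp hc with h | h <;> exact absurd h (by decide)),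
    card_true (fun a : LE G w => (Sum.inr 2 : Vm G w) ∈ moveEnds G w (Sum.inr (Sum.inr (Sum.inl a))))
      (fun a => (mem_pair_iff G w 2 0 2).mpr (Or.inr rfl)),
    card_true (fun a : LE G w => (Sum.inr 2 : Vm G w) ∈ moveEnds G w (Sum.inr (Sum.inr (Sum.inr a))))
      (fun a => (mem_pair_iff G w 2 1 2).mpr (Or.inr rfl))]
  have hL : Nat.card {x : G.E // G.toMultigraph.ends x = s(w, w)} = Nat.card (LE G w) := rfl
  have hN : Nat.card {x : G.E // w ∈ G.toMultigraph.ends x ∧ ¬ G.toMultigraph.ends x = s(w, w)} = Nat.card (NE G w) := rfl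
  omega

theorem loopCount_moveG [Finite G.E] :
    G.loopCount = Nat.card {e : G.E // G.toMultigraph.ends e = s(w, w)} +
      (moveG G w).loopCount := by
  haveI : Finite (NE G w) := Subtype.finite
  haveI : Finite (LE G w) := Subtype.finite
  have hsplit := card_split (fun e : G.E => ∃ v, G.toMultigraph.ends e = s(v, v))
    (fun e : G.E => G.toMultigraph.ends e = s(w, w))
    (fun e he => ⟨w, he⟩)
  show Nat.card {e : G.E // ∃ v, G.toMultigraph.ends e = s(v, v)} =
    _ + Nat.card {e : Em G w // ∃ x : Vm G w, moveEnds G w e = s(x, x)}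
  rw [card_Em]
  have c1 : Nat.card {e : G.E // ∃ x : Vm G w, moveEnds G w (Sum.inl e) = s(x, x)} =
      Nat.card {e : G.E // (∃ a, G.toMultigraph.ends e = s(a, a)) ∧
        ¬ G.toMultigraph.ends e = s(w, w)} :=
    Nat.card_congr (Equiv.subtypeEquivRight fun e => moveEnds_inl_loop_iff G w e)
  have z1 : Nat.card {a : NE G w // ∃ x : Vm G w,
      moveEnds G w (Sum.inr (Sum.inl a)) = s(x, x)} = 0 :=
    card_false _ (fun a ⟨x, hx⟩ => pair_ne_loop G w (show (0:Fin 3) ≠ 1 by decide) x hx)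
  have z2 : Nat.card {a : LE G w // ∃ x : Vm G w,
      moveEnds G w (Sum.inr (Sum.inr (Sum.inl a))) = s(x, x)} = 0 :=
    card_false _ (fun a ⟨x, hx⟩ => pair_ne_loop G w (show (0:Fin 3) ≠ 2 by decide) x hx)
  have z3 : Nat.card {a : LE G w // ∃ x : Vm G w,
      moveEnds G w (Sum.inr (Sum.inr (Sum.inr a))) = s(x, x)} = 0 :=
    card_false _ (fun a ⟨x, hx⟩ => pair_ne_loop G w (show (1:Fin 3) ≠ 2 by decide) x hx)
  rw [c1, z1, z2, z3]
  beta_reduce at hsplit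
  omega

theorem sym2_rep {α : Type} (z : Sym2 α) : ∃ a b, z = s(a, b) := by
  induction z with
  | _ a b => exact ⟨a, b, rfl⟩

def collapse : Vm G w → G.V
  | Sum.inl v => v.1
  | Sum.inr _ => w

theorem collapse_psi (v : G.V) : collapse G w (psi G w v) = v := by
  by_cases h : v = w
  · rw [h, psi_w]; rfl
  · rw [psi_ne G w v h]; rfl

theorem virtAdj_symm (H : LabelledGraph) : Symmetric H.VirtAdj := by
  rintro u v ⟨e, hv, he⟩
  exact ⟨e, hv, he.trans (Sym2.eq_swap)⟩

theorem adj_symm (H : LabelledGraph) : Symmetric H.toMultigraph.Adj := by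
  rintro u v ⟨e, he⟩
  exact ⟨e, he.trans (Sym2.eq_swap)⟩

theorem inr_connected (hk : Nonempty (LE G w)) (i j : Fin 3) :
    Relation.ReflTransGen (moveG G w).VirtAdj (Sum.inr i) (Sum.inr j) := by
  obtain ⟨a⟩ := hk
  have h02 : (moveG G w).VirtAdj (Sum.inr 0) (Sum.inr 2) :=
    ⟨Sum.inr (Sum.inr (Sum.inl a)), trivial, rfl⟩
  have h12 : (moveG G w).VirtAdj (Sum.inr 1) (Sum.inr 2) :=
    ⟨Sum.inr (Sum.inr (Sum.inr a)), trivial, rfl⟩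
  have hsymm := fun {a b : Vm G w} (h : Relation.ReflTransGen (moveG G w).VirtAdj a b) =>
    (@Relation.ReflTransGen.stdSymm _ _ ⟨fun _ _ h => virtAdj_symm (moveG G w) h⟩).symm _ _ h
  have to2 : ∀ l : Fin 3, Relation.ReflTransGen (moveG G w).VirtAdj (Sum.inr l) (Sum.inr 2) := by
    intro l
    match l with
    | ⟨0, _⟩ => exact .single h02
    | ⟨1, _⟩ => exact .single h12
    | ⟨2, _⟩ => exact .refl
  exact (to2 i).trans (hsymm (to2 j))

theorem psi_virt_step {a b : G.V} (h : G.VirtAdj a b) :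
    Relation.ReflTransGen (moveG G w).VirtAdj (psi G w a) (psi G w b) := by
  obtain ⟨e, hv, he⟩ := h
  by_cases hl : G.toMultigraph.ends e = s(w, w)
  · have : s(w, w) = s(a, b) := hl ▸ he
    rcases Sym2.eq_iff.mp this with ⟨h1, h2⟩ | ⟨h1, h2⟩ <;> rw [← h1, ← h2] <;> exact .refl
  · refine .single ⟨Sum.inl e, hv, ?_⟩
    show moveEnds G w (Sum.inl e) = s(psi G w a, psi G w b)
    simp only [moveEnds]
    rw [if_neg hl, he, Sym2.map_pair_eq]

theorem psi_adj_step {a b : G.V} (h : G.toMultigraph.Adj a b) :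
    Relation.ReflTransGen (moveG G w).toMultigraph.Adj (psi G w a) (psi G w b) := by
  obtain ⟨e, he⟩ := h
  by_cases hl : G.toMultigraph.ends e = s(w, w)
  · have : s(w, w) = s(a, b) := hl ▸ he
    rcases Sym2.eq_iff.mp this with ⟨h1, h2⟩ | ⟨h1, h2⟩ <;> rw [← h1, ← h2] <;> exact .refl
  · refine .single ⟨Sum.inl e, ?_⟩
    show moveEnds G w (Sum.inl e) = s(psi G w a, psi G w b)
    simp only [moveEnds]
    rw [if_neg hl, he, Sym2.map_pair_eq]

theorem to_psi (hk : Nonempty (LE G w)) (x : Vm G w) :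
    Relation.ReflTransGen (moveG G w).VirtAdj x (psi G w (collapse G w x)) := by
  match x with
  | Sum.inl v =>
      have hp : psi G w (collapse G w (Sum.inl v)) = Sum.inl v := psi_ne G w v.1 v.2
      rw [hp]
      exact .refl
  | Sum.inr i =>
      have hp : psi G w (collapse G w (Sum.inr i)) = Sum.inr 2 := psi_w G w
      rw [hp]
      exact inr_connected G w hk i 2

theorem moveG_connected (hk : Nonempty (LE G w)) (hconn : G.toMultigraph.Connected) :
    (moveG G w).toMultigraph.Connected := by
  refine ⟨⟨Sum.inr 0⟩, fun u v => ?_⟩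
  have hmono : ∀ x y : Vm G w, (moveG G w).VirtAdj x y → (moveG G w).toMultigraph.Adj x y :=
    fun x y ⟨e, _, he⟩ => ⟨e, he⟩
  have h1 : Relation.ReflTransGen (moveG G w).toMultigraph.Adj u (psi G w (collapse G w u)) :=
    Relation.ReflTransGen.mono hmono _ _ (to_psi G w hk u)
  have h3 : Relation.ReflTransGen (moveG G w).toMultigraph.Adj v (psi G w (collapse G w v)) :=
    Relation.ReflTransGen.mono hmono _ _ (to_psi G w hk v)
  have h2 := rtg_lift (psi G w) (fun a b hab => psi_adj_step G w hab)
    (hconn.2 (collapse G w u) (collapse G w v))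
  exact (h1.trans h2).trans
    ((@Relation.ReflTransGen.stdSymm _ _ ⟨fun _ _ h => adj_symm (moveG G w) h⟩).symm _ _ h3)

theorem moveG_reduces (hk : Nonempty (LE G w)) {c : Multigraph} (hred : ReducesTo G c) :
    ReducesTo (moveG G w) c := by
  obtain ⟨q, fE, hsurj, hfib, hends⟩ := hred
  have hrr : ∀ (j l : Fin 3) (x y : Vm G w), s((Sum.inr j : Vm G w), Sum.inr l) = s(x, y) →
      q (collapse G w x) = q (collapse G w y) := by
    intro j l x y h
    rcases Sym2.eq_iff.mp h with ⟨h1, h2⟩ | ⟨h1, h2⟩ <;> rw [← h1, ← h2] <;> rfl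
  have step_eq : ∀ x y : Vm G w, (moveG G w).VirtAdj x y →
      q (collapse G w x) = q (collapse G w y) := by
    rintro x y ⟨e', hv', he'⟩
    match e' with
    | Sum.inl e =>
        have hq : ∀ (a b : G.V), G.toMultigraph.ends e = s(a, b) → q a = q b :=
          fun a b hab => (hfib a b).mpr (.single ⟨e, hv', hab⟩)
        have he2 : moveEnds G w (Sum.inl e) = s(x, y) := he'
        revert he2
        simp only [moveEnds]
        split_ifs with hl
        · intro he2; exact hrr 0 1 x y he2
        · intro he2
          obtain ⟨a, b, hab⟩ := sym2_rep (G.toMultigraph.ends e)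
          rw [hab, Sym2.map_pair_eq] at he2
          rcases Sym2.eq_iff.mp he2 with ⟨h1, h2⟩ | ⟨h1, h2⟩ <;>
            rw [← h1, ← h2, collapse_psi, collapse_psi]
          · exact hq a b hab
          · exact (hq a b hab).symm
    | Sum.inr (Sum.inl a) => exact hrr 0 1 x y he'
    | Sum.inr (Sum.inr (Sum.inl a)) => exact hrr 0 2 x y he'
    | Sum.inr (Sum.inr (Sum.inr a)) => exact hrr 1 2 x y he'
  let eqv : {e : Em G w // ¬ (moveG G w).virt e} ≃ {e : G.E // ¬ G.virt e} :=
  { toFun := fun x => match x with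
      | ⟨Sum.inl e, h⟩ => ⟨e, h⟩
      | ⟨Sum.inr y, h⟩ => absurd trivial h
    invFun := fun e => ⟨Sum.inl e.1, e.2⟩
    left_inv := by
      rintro ⟨e | y, h⟩
      · rfl
      · exact absurd trivial h
    right_inv := fun e => rfl }
  refine ⟨fun x => q (collapse G w x), eqv.trans fE, ?_, ?_, ?_⟩
  · intro y
    obtain ⟨v, rfl⟩ := hsurj y
    refine ⟨psi G w v, ?_⟩
    show q (collapse G w (psi G w v)) = q v
    rw [collapse_psi]
  · intro u v
    constructor
    · intro hq
      have h0 : Relation.ReflTransGen G.VirtAdj (collapse G w u) (collapse G w v) :=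
        (hfib _ _).mp hq
      have h2 := rtg_lift (psi G w) (fun a b hab => psi_virt_step G w hab) h0
      exact ((to_psi G w hk u).trans h2).trans
        ((@Relation.ReflTransGen.stdSymm _ _ ⟨fun _ _ h => virtAdj_symm (moveG G w) h⟩).symm _ _ (to_psi G w hk v))
    · intro h
      induction h with
      | refl => rfl
      | tail _ hstep ih => exact ih.trans (step_eq _ _ hstep)
  · rintro ⟨e' , h⟩
    match e', h with
    | Sum.inl e, h =>
        show c.ends (fE ⟨e, h⟩) = (moveEnds G w (Sum.inl e)).map (fun x => q (collapse G w x))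
        rw [hends ⟨e, h⟩]
        simp only [moveEnds]
        split_ifs with hl
        · rw [hl, Sym2.map_pair_eq, Sym2.map_pair_eq]; rfl
        · rw [Sym2.map_map]
          congr 1
          funext v
          show q v = q (collapse G w (psi G w v))
          rw [collapse_psi]
    | Sum.inr y, h => exact absurd trivial h

theorem step (n : ℕ) (G : LabelledGraph) (c : Multigraph)
    (hfin : G.toMultigraph.IsFinite) (hconn : G.toMultigraph.Connected)
    (hreg : ∀ v : G.V, G.toMultigraph.degree v = n) (hred : ReducesTo G c) (w : G.V)
    (hk1 : 1 ≤ Nat.card {e : G.E // G.toMultigraph.ends e = s(w, w)})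
    (hk2 : Nat.card {e : G.E // G.toMultigraph.ends e = s(w, w)} ≤ n / 2) :
    ∃ G' : LabelledGraph, G'.toMultigraph.IsFinite ∧ G'.toMultigraph.Connected ∧
      (∀ v : G'.V, G'.toMultigraph.degree v = n) ∧ ReducesTo G' c ∧
      G'.loopCount < G.loopCount := by
  obtain ⟨hVfin, hEfin⟩ := hfin
  haveI : Finite G.V := hVfin
  haveI : Finite G.E := hEfin
  haveI : Finite (Vm G w) := inferInstanceAs (Finite ({v : G.V // v ≠ w} ⊕ Fin 3))
  haveI : Finite (NE G w) := Subtype.finite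
  haveI : Finite (LE G w) := Subtype.finite
  haveI : Finite (Em G w) :=
    inferInstanceAs (Finite (G.E ⊕ (NE G w ⊕ (LE G w ⊕ LE G w))))
  have hk1' : 0 < Nat.card (LE G w) := hk1
  have hkne : Nonempty (LE G w) := (Nat.card_pos_iff.mp hk1').1
  have hdeg : Nat.card {e : G.E // w ∈ G.toMultigraph.ends e} + Nat.card (LE G w) = n :=
    hreg w
  have hNE := card_NE G w
  have harr : Nat.card (LE G w) + Nat.card (LE G w) + Nat.card (NE G w) = n := by omega
  refine ⟨moveG G w, ⟨inferInstanceAs (Finite (Vm G w)), inferInstanceAs (Finite (Em G w))⟩, moveG_connected G w hkne hconn,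
    ?_, moveG_reduces G w hkne hred, ?_⟩
  · rintro (⟨v, hv⟩ | i)
    · rw [degree_inl G w v hv]; exact hreg v
    · match i with
      | ⟨0, _⟩ => exact (degree_inr0 G w).trans harr
      | ⟨1, _⟩ => exact (degree_inr1 G w).trans harr
      | ⟨2, _⟩ => exact (degree_inr2 G w).trans (by omega)
  · have hlc := loopCount_moveG G w
    have hk1'' : 1 ≤ Nat.card {e : G.E // G.toMultigraph.ends e = s(w, w)} := hk1
    omega

theorem loop_bound (n : ℕ) (G : LabelledGraph) [Finite G.E]
    (hreg : ∀ v : G.V, G.toMultigraph.degree v = n) (v : G.V) :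
    Nat.card {e : G.E // G.toMultigraph.ends e = s(v, v)} ≤ n / 2 := by
  have hdeg : Nat.card {e : G.E // v ∈ G.toMultigraph.ends e} +
      Nat.card {e : G.E // G.toMultigraph.ends e = s(v, v)} = n := hreg v
  have hsplit := card_split (fun e : G.E => v ∈ G.toMultigraph.ends e)
    (fun e : G.E => G.toMultigraph.ends e = s(v, v))
    (fun e he => by
      show v ∈ G.toMultigraph.ends e
      rw [show G.toMultigraph.ends e = s(v, v) from he]
      exact Sym2.mem_iff.mpr (Or.inl rfl))
  beta_reduce at hsplit
  omega

end OneNMove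

/-- The `(1–n)`-move: a loop at a vertex of a labelled `n`-regular graph can always be
removed by a sequence of expansion and creation moves producing another labelled
`n`-regular graph with strictly fewer loops that reduces to the same unlabelled graph;
iterating, every class `π_n⁻¹(c)` of labelled `n`-regular graphs reducing to a given
connected multigraph `c` contains a loopless representative. -/
theorem one_n_move_loop_removal (n : ℕ) (hn : 3 ≤ n) :
    (∀ (G : LabelledGraph) (c : Multigraph),
      G.toMultigraph.IsFinite → G.toMultigraph.Connected →
      (∀ v : G.V, G.toMultigraph.degree v = n) → ReducesTo G c →
      ∀ w : G.V,
        1 ≤ Nat.card {e : G.E // G.toMultigraph.ends e = s(w, w)} →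
        Nat.card {e : G.E // G.toMultigraph.ends e = s(w, w)} ≤ n / 2 →
      ∃ G' : LabelledGraph, G'.toMultigraph.IsFinite ∧ G'.toMultigraph.Connected ∧
        (∀ v : G'.V, G'.toMultigraph.degree v = n) ∧ ReducesTo G' c ∧
        G'.loopCount < G.loopCount) ∧
    (∀ (G : LabelledGraph) (c : Multigraph),
      G.toMultigraph.IsFinite → G.toMultigraph.Connected →
      (∀ v : G.V, G.toMultigraph.degree v = n) → ReducesTo G c →
      ∃ G' : LabelledGraph, G'.toMultigraph.IsFinite ∧ G'.toMultigraph.Connected ∧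
        (∀ v : G'.V, G'.toMultigraph.degree v = n) ∧ ReducesTo G' c ∧
        G'.Loopless) := by
  constructor
  · intro G c hfin hconn hreg hred w hk1 hk2
    exact OneNMove.step n G c hfin hconn hreg hred w hk1 hk2
  · have H : ∀ (N : ℕ) (G : LabelledGraph) (c : Multigraph), G.loopCount ≤ N →
        G.toMultigraph.IsFinite → G.toMultigraph.Connected →
        (∀ v : G.V, G.toMultigraph.degree v = n) → ReducesTo G c →
        ∃ G' : LabelledGraph, G'.toMultigraph.IsFinite ∧ G'.toMultigraph.Connected ∧
          (∀ v : G'.V, G'.toMultigraph.degree v = n) ∧ ReducesTo G' c ∧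
          G'.Loopless := by
      intro N
      induction N with
      | zero =>
        intro G c hle hfin hconn hreg hred
        refine ⟨G, hfin, hconn, hreg, hred, ?_⟩
        haveI : Finite G.E := hfin.2
        have h0 : Nat.card {e : G.E // ∃ v : G.V, G.toMultigraph.ends e = s(v, v)} = 0 :=
          Nat.le_zero.mp hle
        have hemp : IsEmpty {e : G.E // ∃ v : G.V, G.toMultigraph.ends e = s(v, v)} := by
          rcases Nat.card_eq_zero.mp h0 with h | h
          · exact h
          · haveI := h
            exact (not_finite {e : G.E // ∃ v : G.V, G.toMultigraph.ends e = s(v, v)}).elim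
        exact fun e he => hemp.false ⟨e, he⟩
      | succ N ih =>
        intro G c hle hfin hconn hreg hred
        haveI : Finite G.E := hfin.2
        by_cases hl : G.Loopless
        · exact ⟨G, hfin, hconn, hreg, hred, hl⟩
        · have hex : ∃ e : G.E, ∃ v : G.V, G.toMultigraph.ends e = s(v, v) := by
            by_contra hc
            push_neg at hc
            exact hl fun e he => by
              obtain ⟨v, hv⟩ := he
              exact (hc e v) hv
          obtain ⟨e, v, hv⟩ := hex
          have hk1 : 1 ≤ Nat.card {e : G.E // G.toMultigraph.ends e = s(v, v)} :=
            Nat.card_pos_iff.mpr ⟨⟨⟨e, hv⟩⟩, inferInstance⟩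
          have hk2 := OneNMove.loop_bound n G hreg v
          obtain ⟨G', hfin', hconn', hreg', hred', hlt⟩ :=
            OneNMove.step n G c hfin hconn hreg hred v hk1 hk2
          exact ih G' c (by omega) hfin' hconn' hreg' hred'
    intro G c hfin hconn hreg hred
    exact H G.loopCount G c le_rfl hfin hconn hreg hred
end
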